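/- For all indices 0 ≤ i ≤ t ≤ t₀ ≤ T−1, the truncated Riccati matrices satisfy ‖P_{i|t} − P_{i|t₀}‖ ≤ (λ_max(P̄_max)²/λ_min(Q̄_min))·γ^{t+1−i}. -/

import Mathlib

open Matrix Finset
open scoped Matrix.Norms.L2Operator

noncomputable section

/-- Euclidean norm of a real vector. -/
def enorm {k : ℕ} (x : Fin k → ℝ) : ℝ := ‖(WithLp.equiv 2 (Fin k → ℝ)).symm x‖

/-- Largest eigenvalue (supremum of the real spectrum) of a square real matrix. -/
def lmax {k : ℕ} (M : Matrix (Fin k) (Fin k) ℝ) : ℝ := sSup (spectrum ℝ M)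

/-- Smallest eigenvalue (infimum of the real spectrum) of a square real matrix. -/
def lmin {k : ℕ} (M : Matrix (Fin k) (Fin k) ℝ) : ℝ := sInf (spectrum ℝ M)

variable {n m : ℕ}

/-- The LQR feedback gain associated with cost matrix `R` and value matrix `P'`. -/
def gainK (A : Matrix (Fin n) (Fin n) ℝ) (B : Matrix (Fin n) (Fin m) ℝ)
    (R : Matrix (Fin m) (Fin m) ℝ) (P' : Matrix (Fin n) (Fin n) ℝ) :
    Matrix (Fin m) (Fin n) ℝ :=
  -((R + Bᵀ * P' * B)⁻¹ * Bᵀ * P' * A)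

/-- One backwards Riccati step. -/
def ricStep (A : Matrix (Fin n) (Fin n) ℝ) (B : Matrix (Fin n) (Fin m) ℝ)
    (R : Matrix (Fin m) (Fin m) ℝ) (Q P' : Matrix (Fin n) (Fin n) ℝ) :
    Matrix (Fin n) (Fin n) ℝ :=
  Aᵀ * P' * A + Q + Aᵀ * P' * B * gainK A B R P'

/-- Truncated cost matrices `Q_{i|s}`. -/
def trunc {N : Type*} (Q : ℕ → N) (i s : ℕ) : N := if i ≤ s then Q i else Q s

/-- Backwards truncated Riccati recursion: `ricBackTr A B T Q R s d = P_{T-1-d|s}`. -/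
def ricBackTr (A : Matrix (Fin n) (Fin n) ℝ) (B : Matrix (Fin n) (Fin m) ℝ) (T : ℕ)
    (Q : ℕ → Matrix (Fin n) (Fin n) ℝ) (R : ℕ → Matrix (Fin m) (Fin m) ℝ) (s : ℕ) :
    ℕ → Matrix (Fin n) (Fin n) ℝ
  | 0 => trunc Q (T - 1) s
  | d + 1 => ricStep A B (trunc R (T - 2 - d) s) (trunc Q (T - 2 - d) s)
      (ricBackTr A B T Q R s d)

/-- `Pts A B T Q R i s = P_{i|s}`, the truncated Riccati value matrix. -/
def Pts (A : Matrix (Fin n) (Fin n) ℝ) (B : Matrix (Fin n) (Fin m) ℝ) (T : ℕ)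
    (Q : ℕ → Matrix (Fin n) (Fin n) ℝ) (R : ℕ → Matrix (Fin m) (Fin m) ℝ) (i s : ℕ) :
    Matrix (Fin n) (Fin n) ℝ :=
  ricBackTr A B T Q R s (T - 1 - i)

/-- `Kts A B T Q R i s = K_{i|s}`, the truncated Riccati gain. -/
def Kts (A : Matrix (Fin n) (Fin n) ℝ) (B : Matrix (Fin n) (Fin m) ℝ) (T : ℕ)
    (Q : ℕ → Matrix (Fin n) (Fin n) ℝ) (R : ℕ → Matrix (Fin m) (Fin m) ℝ) (i s : ℕ) :
    Matrix (Fin m) (Fin n) ℝ :=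
  gainK A B (trunc R i s) (Pts A B T Q R (i + 1) s)

/-- `xts A B T Q R x₀ s i = x_{i|s}`, the predicted trajectory planned with information up to
time `s`. -/
def xts (A : Matrix (Fin n) (Fin n) ℝ) (B : Matrix (Fin n) (Fin m) ℝ) (T : ℕ)
    (Q : ℕ → Matrix (Fin n) (Fin n) ℝ) (R : ℕ → Matrix (Fin m) (Fin m) ℝ)
    (x₀ : Fin n → ℝ) (s : ℕ) : ℕ → Fin n → ℝ
  | 0 => x₀
  | i + 1 => (A + B * Kts A B T Q R i s) *ᵥ xts A B T Q R x₀ s i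

namespace TRVC

variable {n m k l : ℕ}

/-- Loewner order: `lw X Y` means `X ⪯ Y`. -/
def lw {k : ℕ} (X Y : Matrix (Fin k) (Fin k) ℝ) : Prop := (Y - X).PosSemidef

lemma ct (M : Matrix (Fin k) (Fin l) ℝ) : Mᴴ = Mᵀ :=
  Matrix.conjTranspose_eq_transpose_of_trivial M

lemma psd_conj {M : Matrix (Fin k) (Fin k) ℝ} (hM : M.PosSemidef)
    (C : Matrix (Fin k) (Fin l) ℝ) : (Cᵀ * M * C).PosSemidef := by
  simpa [ct] using hM.conjTranspose_mul_mul_same C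

lemma psd_smul {M : Matrix (Fin k) (Fin k) ℝ} (hM : M.PosSemidef) {c : ℝ} (hc : 0 ≤ c) :
    (c • M).PosSemidef := by
  refine posSemidef_iff_dotProduct_mulVec.mpr ⟨?_, ?_⟩
  · show _ = _
    rw [Matrix.conjTranspose_smul, hM.1.eq]
    simp
  · intro x
    have := hM.dotProduct_mulVec_nonneg x
    simp only [Matrix.smul_mulVec, dotProduct_smul]
    positivity

lemma lw_refl (X : Matrix (Fin k) (Fin k) ℝ) : lw X X := by simp [lw, Matrix.PosSemidef.zero]

lemma lw_trans {X Y Z : Matrix (Fin k) (Fin k) ℝ} (h1 : lw X Y) (h2 : lw Y Z) : lw X Z := by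
  have := h1.add h2
  simpa [lw, add_comm] using this

lemma lw_add {X Y X' Y' : Matrix (Fin k) (Fin k) ℝ} (h1 : lw X Y) (h2 : lw X' Y') :
    lw (X + X') (Y + Y') := by
  have := h1.add h2
  unfold lw at *
  convert this using 1
  abel

lemma lw_congr {X Y : Matrix (Fin k) (Fin k) ℝ} (h : lw X Y) (C : Matrix (Fin k) (Fin l) ℝ) :
    lw (Cᵀ * X * C) (Cᵀ * Y * C) := by
  have := psd_conj h C
  unfold lw at *
  convert this using 1
  simp [Matrix.sub_mul, Matrix.mul_sub]

lemma lw_smul {X Y : Matrix (Fin k) (Fin k) ℝ} (h : lw X Y) {c : ℝ} (hc : 0 ≤ c) :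
    lw (c • X) (c • Y) := by
  have := psd_smul h hc
  unfold lw at *
  convert this using 1
  rw [smul_sub]

lemma lw_of_psd {Y : Matrix (Fin k) (Fin k) ℝ} (h : Y.PosSemidef) : lw 0 Y := by
  simpa [lw] using h

lemma psd_of_lw {Y : Matrix (Fin k) (Fin k) ℝ} (h : lw 0 Y) : Y.PosSemidef := by
  simpa [lw] using h

lemma lw_sub_iff {X Y Z : Matrix (Fin k) (Fin k) ℝ} (h : lw X Y) : lw (X - Z) (Y - Z) := by
  unfold lw at *
  convert h using 1
  abel

lemma lw_add_left {X Y Z : Matrix (Fin k) (Fin k) ℝ} (h : lw X Y) : lw (Z + X) (Z + Y) := by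
  unfold lw at *
  convert h using 1
  abel

end TRVC
namespace TRVC

variable {n m : ℕ}
variable (A : Matrix (Fin n) (Fin n) ℝ) (B : Matrix (Fin n) (Fin m) ℝ)

lemma abstract_cs (S Si : Matrix (Fin m) (Fin m) ℝ) (G K : Matrix (Fin m) (Fin n) ℝ)
    (hSi : Siᵀ = Si) (h1 : S * Si = 1) (h2 : Si * S = 1) :
    Kᵀ * S * K + Gᵀ * K + Kᵀ * G
      = -(Gᵀ * (Si * G)) + (K + Si * G)ᵀ * S * (K + Si * G) := by
  have e1 : Kᵀ * S * (Si * G) = Kᵀ * G := by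
    rw [Matrix.mul_assoc (Kᵀ), ← Matrix.mul_assoc S, h1, Matrix.one_mul]
  have e2 : (Si * G)ᵀ * S * K = Gᵀ * K := by
    rw [Matrix.transpose_mul, hSi, Matrix.mul_assoc, Matrix.mul_assoc, ← Matrix.mul_assoc Si,
      h2, Matrix.one_mul]
  have e3 : (Si * G)ᵀ * S * (Si * G) = Gᵀ * (Si * G) := by
    rw [Matrix.transpose_mul, hSi, Matrix.mul_assoc, Matrix.mul_assoc, ← Matrix.mul_assoc Si,
      h2, Matrix.one_mul]
  rw [Matrix.transpose_add, Matrix.add_mul, Matrix.add_mul, Matrix.mul_add, Matrix.mul_add,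
    e1, e2, e3]
  abel

/-- Completion of squares for the Riccati step. -/
lemma cs_key {R : Matrix (Fin m) (Fin m) ℝ} {P' : Matrix (Fin n) (Fin n) ℝ}
    (Q : Matrix (Fin n) (Fin n) ℝ) (hR : R.PosDef) (hP : P'.PosSemidef)
    (K : Matrix (Fin m) (Fin n) ℝ) :
    (A + B * K)ᵀ * P' * (A + B * K) + Kᵀ * R * K + Q
      = ricStep A B R Q P'
        + (K - gainK A B R P')ᵀ * (R + Bᵀ * P' * B) * (K - gainK A B R P') := by
  set S := R + Bᵀ * P' * B with hSdef
  have hBPB : (Bᵀ * P' * B).PosSemidef := psd_conj hP B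
  have hS : S.PosDef := hR.add_posSemidef hBPB
  have hSymS : Sᵀ = S := by
    have := hS.isHermitian.eq; rwa [ct] at this
  have hUnit : IsUnit S.det := isUnit_iff_ne_zero.mpr (ne_of_gt hS.det_pos)
  have h1 : S * S⁻¹ = 1 := Matrix.mul_nonsing_inv S hUnit
  have h2 : S⁻¹ * S = 1 := Matrix.nonsing_inv_mul S hUnit
  have hSi : (S⁻¹)ᵀ = S⁻¹ := by
    rw [Matrix.transpose_nonsing_inv, hSymS]
  have hPs : P'ᵀ = P' := by have := hP.isHermitian.eq; rwa [ct] at this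
  set G := Bᵀ * P' * A with hGdef
  have hGt : Gᵀ = Aᵀ * P' * B := by
    rw [hGdef, Matrix.transpose_mul, Matrix.transpose_mul, Matrix.transpose_transpose, hPs,
      Matrix.mul_assoc]
  have hgain : gainK A B R P' = -(S⁻¹ * G) := by
    rw [gainK, hGdef, hSdef]
    rw [Matrix.mul_assoc, Matrix.mul_assoc, Matrix.mul_assoc, Matrix.mul_assoc]
  have key := abstract_cs S S⁻¹ G K hSi h1 h2
  have hK : K - gainK A B R P' = K + S⁻¹ * G := by rw [hgain, sub_neg_eq_add]
  rw [hK]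
  have hric : ricStep A B R Q P' = Aᵀ * P' * A + Q + -(Gᵀ * (S⁻¹ * G)) := by
    rw [ricStep, hgain, hGt, Matrix.mul_neg]
  rw [hric]
  have lhs_exp : (A + B * K)ᵀ * P' * (A + B * K) + Kᵀ * R * K + Q
      = Aᵀ * P' * A + Q + (Kᵀ * S * K + Gᵀ * K + Kᵀ * G) := by
    rw [hSdef, hGdef, hGt]
    simp only [Matrix.transpose_add, Matrix.transpose_mul, Matrix.transpose_transpose, hPs,
      Matrix.mul_add, Matrix.add_mul, Matrix.mul_assoc]
    abel
  rw [lhs_exp, key]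
  abel

end TRVC
namespace TRVC

variable {n m : ℕ}
variable (A : Matrix (Fin n) (Fin n) ℝ) (B : Matrix (Fin n) (Fin m) ℝ)

/-- The Riccati step equals its value at the optimal gain. -/
lemma ricStep_eq {R : Matrix (Fin m) (Fin m) ℝ} {P' : Matrix (Fin n) (Fin n) ℝ}
    (Q : Matrix (Fin n) (Fin n) ℝ) (hR : R.PosDef) (hP : P'.PosSemidef) :
    ricStep A B R Q P'
      = (A + B * gainK A B R P')ᵀ * P' * (A + B * gainK A B R P')
        + (gainK A B R P')ᵀ * R * gainK A B R P' + Q := by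
  have := cs_key A B Q hR hP (gainK A B R P')
  simpa using this.symm

/-- The Riccati step is below the value at any gain. -/
lemma ricStep_le {R : Matrix (Fin m) (Fin m) ℝ} {P' : Matrix (Fin n) (Fin n) ℝ}
    (Q : Matrix (Fin n) (Fin n) ℝ) (hR : R.PosDef) (hP : P'.PosSemidef)
    (K : Matrix (Fin m) (Fin n) ℝ) :
    lw (ricStep A B R Q P') ((A + B * K)ᵀ * P' * (A + B * K) + Kᵀ * R * K + Q) := by
  have hkey := cs_key A B Q hR hP K
  have hBPB : (Bᵀ * P' * B).PosSemidef := psd_conj hP B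
  have hS : (R + Bᵀ * P' * B).PosDef := hR.add_posSemidef hBPB
  have hsq : ((K - gainK A B R P')ᵀ * (R + Bᵀ * P' * B) * (K - gainK A B R P')).PosSemidef :=
    psd_conj hS.posSemidef _
  unfold lw
  rw [hkey]
  simpa using hsq

/-- The Riccati step dominates `Q`. -/
lemma ricStep_ge_Q {R : Matrix (Fin m) (Fin m) ℝ} {P' : Matrix (Fin n) (Fin n) ℝ}
    (Q : Matrix (Fin n) (Fin n) ℝ) (hR : R.PosDef) (hP : P'.PosSemidef) :
    lw Q (ricStep A B R Q P') := by
  rw [ricStep_eq A B Q hR hP]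
  unfold lw
  have h1 := psd_conj hP (A + B * gainK A B R P')
  have h2 := psd_conj hR.posSemidef (gainK A B R P')
  simpa using h1.add h2

lemma ricStep_psd {R : Matrix (Fin m) (Fin m) ℝ} {P' : Matrix (Fin n) (Fin n) ℝ}
    {Q : Matrix (Fin n) (Fin n) ℝ} (hQ : Q.PosSemidef) (hR : R.PosDef) (hP : P'.PosSemidef) :
    (ricStep A B R Q P').PosSemidef := by
  have := lw_trans (lw_of_psd hQ) (ricStep_ge_Q A B Q hR hP)
  exact psd_of_lw this

/-- Monotonicity of the Riccati step in all three arguments. -/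
lemma ricStep_mono {R₁ R₂ : Matrix (Fin m) (Fin m) ℝ} {P₁ P₂ Q₁ Q₂ : Matrix (Fin n) (Fin n) ℝ}
    (hR₁ : R₁.PosDef) (hR₂ : R₂.PosDef) (hP₁ : P₁.PosSemidef) (hP₂ : P₂.PosSemidef)
    (hP : lw P₁ P₂) (hQ : lw Q₁ Q₂) (hRR : lw R₁ R₂) :
    lw (ricStep A B R₁ Q₁ P₁) (ricStep A B R₂ Q₂ P₂) := by
  set K₂ := gainK A B R₂ P₂ with hK₂
  have step1 := ricStep_le A B Q₁ hR₁ hP₁ K₂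
  have step2 : lw ((A + B * K₂)ᵀ * P₁ * (A + B * K₂) + K₂ᵀ * R₁ * K₂ + Q₁)
      ((A + B * K₂)ᵀ * P₂ * (A + B * K₂) + K₂ᵀ * R₂ * K₂ + Q₂) :=
    lw_add (lw_add (lw_congr hP _) (lw_congr hRR _)) hQ
  have step3 : ricStep A B R₂ Q₂ P₂
      = (A + B * K₂)ᵀ * P₂ * (A + B * K₂) + K₂ᵀ * R₂ * K₂ + Q₂ :=
    ricStep_eq A B Q₂ hR₂ hP₂
  rw [step3]
  exact lw_trans step1 step2

/-- Riccati difference bound: `F(P₁) - F(P₂) ⪯ L₂ᵀ (P₁ - P₂) L₂`. -/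
lemma ricStep_diff_le {R : Matrix (Fin m) (Fin m) ℝ} {P₁ P₂ : Matrix (Fin n) (Fin n) ℝ}
    (Q : Matrix (Fin n) (Fin n) ℝ) (hR : R.PosDef) (hP₁ : P₁.PosSemidef) (hP₂ : P₂.PosSemidef) :
    lw (ricStep A B R Q P₁ - ricStep A B R Q P₂)
      ((A + B * gainK A B R P₂)ᵀ * (P₁ - P₂) * (A + B * gainK A B R P₂)) := by
  set K₂ := gainK A B R P₂ with hK₂
  set L₂ := A + B * K₂ with hL₂
  have step1 := ricStep_le A B Q hR hP₁ K₂
  have step3 : ricStep A B R Q P₂ = L₂ᵀ * P₂ * L₂ + K₂ᵀ * R * K₂ + Q :=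
    ricStep_eq A B Q hR hP₂
  have : lw (ricStep A B R Q P₁ - ricStep A B R Q P₂)
      ((L₂ᵀ * P₁ * L₂ + K₂ᵀ * R * K₂ + Q) - ricStep A B R Q P₂) := lw_sub_iff step1
  refine lw_trans this ?_
  rw [step3]
  have heq : (L₂ᵀ * P₁ * L₂ + K₂ᵀ * R * K₂ + Q) - (L₂ᵀ * P₂ * L₂ + K₂ᵀ * R * K₂ + Q)
      = L₂ᵀ * (P₁ - P₂) * L₂ := by
    rw [Matrix.mul_sub, Matrix.sub_mul]
    abel
  rw [heq]
  exact lw_refl _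

/-- Closed-loop contraction: `L₀ᵀ P' L₀ ⪯ γ • ricStep`. -/
lemma gamma_lemma {R : Matrix (Fin m) (Fin m) ℝ} {P' Q : Matrix (Fin n) (Fin n) ℝ}
    (hR : R.PosDef) (hP : P'.PosSemidef) {α β : ℝ} (hα : 0 < α) (hβ : 0 < β)
    (hAPA : lw (Aᵀ * P' * A) (α • 1)) (hQβ : lw (β • (1 : Matrix (Fin n) (Fin n) ℝ)) Q) :
    lw ((A + B * gainK A B R P')ᵀ * P' * (A + B * gainK A B R P'))
      ((α / (α + β)) • ricStep A B R Q P') := by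
  set γ := α / (α + β) with hγdef
  have hαβ : 0 < α + β := by linarith
  have hγ0 : 0 < γ := div_pos hα hαβ
  have hγ1 : γ < 1 := by rw [hγdef, div_lt_one hαβ]; linarith
  set F := ricStep A B R Q P' with hF
  -- L₀ᵀ P' L₀ ⪯ F - Q
  have h1 : lw ((A + B * gainK A B R P')ᵀ * P' * (A + B * gainK A B R P')) (F - Q) := by
    have heq := ricStep_eq A B Q hR hP
    unfold lw
    have h2 := psd_conj hR.posSemidef (gainK A B R P')
    have : F - Q - (A + B * gainK A B R P')ᵀ * P' * (A + B * gainK A B R P')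
        = (gainK A B R P')ᵀ * R * gainK A B R P' := by
      rw [hF, heq]; abel
    rw [this]
    exact h2
  refine lw_trans h1 ?_
  -- F - Q ⪯ Aᵀ P' A  (take K = 0)
  have h2 : lw (F - Q) (Aᵀ * P' * A) := by
    have := ricStep_le A B Q hR hP 0
    simp only [Matrix.mul_zero, add_zero, Matrix.transpose_zero, Matrix.zero_mul] at this
    have h3 : lw (F - Q) ((Aᵀ * P' * A + Q) - Q) := lw_sub_iff this
    simpa using h3
  have h4 : lw (F - Q) (α • (1 : Matrix (Fin n) (Fin n) ℝ)) := lw_trans h2 hAPA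
  -- (1-γ) • (F - Q) ⪯ (1-γ)α • 1 = γβ • 1 ⪯ γ • Q
  have h5 : lw ((1 - γ) • (F - Q)) ((γ * β) • (1 : Matrix (Fin n) (Fin n) ℝ)) := by
    have := lw_smul h4 (le_of_lt (by linarith : (0:ℝ) < 1 - γ))
    have hsc : (1 - γ) * α = γ * β := by
      rw [hγdef]; field_simp; ring
    rw [smul_smul, hsc] at this
    exact this
  have h6 : lw ((γ * β) • (1 : Matrix (Fin n) (Fin n) ℝ)) (γ • Q) := by
    have := lw_smul hQβ (le_of_lt hγ0)
    rwa [smul_smul] at this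
  have h7 : lw ((1 - γ) • (F - Q)) (γ • Q) := lw_trans h5 h6
  -- conclude: γ • F - (F - Q) = γ • Q - (1-γ) • (F - Q)
  unfold lw at h7 ⊢
  have hiden : γ • F - (F - Q) = γ • Q - (1 - γ) • (F - Q) := by
    module
  rw [hiden]
  exact h7

end TRVC
namespace TRVC

variable {k : ℕ}

lemma eig_le_lmax {M : Matrix (Fin k) (Fin k) ℝ} (hM : M.IsHermitian) (i : Fin k) :
    hM.eigenvalues i ≤ lmax M :=
  le_csSup (Matrix.finite_real_spectrum (A := M)).bddAbove (hM.eigenvalues_mem_spectrum_real i)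

lemma lmin_le_eig {M : Matrix (Fin k) (Fin k) ℝ} (hM : M.IsHermitian) (i : Fin k) :
    lmin M ≤ hM.eigenvalues i :=
  csInf_le (Matrix.finite_real_spectrum (A := M)).bddBelow (hM.eigenvalues_mem_spectrum_real i)

lemma smul_one_eq_diagonal (c : ℝ) :
    c • (1 : Matrix (Fin k) (Fin k) ℝ) = Matrix.diagonal (fun _ => c) := by
  ext i j
  by_cases h : i = j <;> simp [Matrix.diagonal, Matrix.one_apply, h]

lemma unitary_conj_psd {U N : Matrix (Fin k) (Fin k) ℝ} (hN : N.PosSemidef) :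
    (U * N * star U).PosSemidef := by
  rw [Matrix.star_eq_conjTranspose]
  exact hN.mul_mul_conjTranspose_same U

/-- A Hermitian matrix is bounded by `c • 1` whenever all eigenvalues are `≤ c`. -/
lemma herm_le_smul_one {M : Matrix (Fin k) (Fin k) ℝ} (hM : M.IsHermitian) {c : ℝ}
    (h : ∀ i, hM.eigenvalues i ≤ c) : lw M (c • 1) := by
  set U : Matrix (Fin k) (Fin k) ℝ := (hM.eigenvectorUnitary : Matrix (Fin k) (Fin k) ℝ) with hU
  have hUU : U * star U = 1 := (Matrix.mem_unitaryGroup_iff).mp hM.eigenvectorUnitary.2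
  have hD : (Matrix.diagonal (fun i => c - hM.eigenvalues i)).PosSemidef :=
    Matrix.PosSemidef.diagonal (fun i => by simpa using h i)
  have key : c • (1 : Matrix (Fin k) (Fin k) ℝ) - M
      = U * (Matrix.diagonal (fun i => c - hM.eigenvalues i)) * star U := by
    have hspec := hM.spectral_theorem
    have hdiag : Matrix.diagonal (fun i => c - hM.eigenvalues i)
        = Matrix.diagonal (fun _ => c) - Matrix.diagonal (RCLike.ofReal ∘ hM.eigenvalues) := by
      rw [Matrix.diagonal_sub]
      rfl
    rw [hdiag, Matrix.mul_sub, Matrix.sub_mul]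
    have h1 : U * Matrix.diagonal (fun _ => (c:ℝ)) * star U = c • 1 := by
      rw [← smul_one_eq_diagonal, Matrix.mul_smul, Matrix.mul_one, Matrix.smul_mul, hUU]
    rw [h1]
    congr 1
  rw [lw, key]
  exact unitary_conj_psd hD

lemma smul_one_le_herm {M : Matrix (Fin k) (Fin k) ℝ} (hM : M.IsHermitian) {c : ℝ}
    (h : ∀ i, c ≤ hM.eigenvalues i) : lw (c • 1) M := by
  set U : Matrix (Fin k) (Fin k) ℝ := (hM.eigenvectorUnitary : Matrix (Fin k) (Fin k) ℝ) with hU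
  have hUU : U * star U = 1 := (Matrix.mem_unitaryGroup_iff).mp hM.eigenvectorUnitary.2
  have hD : (Matrix.diagonal (fun i => hM.eigenvalues i - c)).PosSemidef :=
    Matrix.PosSemidef.diagonal (fun i => by simpa using h i)
  have key : M - c • (1 : Matrix (Fin k) (Fin k) ℝ)
      = U * (Matrix.diagonal (fun i => hM.eigenvalues i - c)) * star U := by
    have hspec := hM.spectral_theorem
    have hdiag : Matrix.diagonal (fun i => hM.eigenvalues i - c)
        = Matrix.diagonal (RCLike.ofReal ∘ hM.eigenvalues) - Matrix.diagonal (fun _ => c) := by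
      rw [Matrix.diagonal_sub]
      rfl
    rw [hdiag, Matrix.mul_sub, Matrix.sub_mul]
    have h1 : U * Matrix.diagonal (fun _ => (c:ℝ)) * star U = c • 1 := by
      rw [← smul_one_eq_diagonal, Matrix.mul_smul, Matrix.mul_one, Matrix.smul_mul, hUU]
    rw [h1]
    congr 1
  rw [lw, key]
  exact unitary_conj_psd hD

end TRVC
namespace TRVC

variable {k : ℕ}

lemma lmin_pos_of_posdef (hk : 1 ≤ k) {M : Matrix (Fin k) (Fin k) ℝ} (hM : M.PosDef) :
    0 < lmin M := by
  haveI : Nonempty (Fin k) := ⟨⟨0, hk⟩⟩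
  have hspec : spectrum ℝ M = Set.range hM.1.eigenvalues :=
    hM.1.spectrum_real_eq_range_eigenvalues
  have hne : (spectrum ℝ M).Nonempty := by rw [hspec]; exact Set.range_nonempty _
  have hmem : lmin M ∈ spectrum ℝ M :=
    hne.csInf_mem (Matrix.finite_real_spectrum (A := M))
  rw [hspec] at hmem
  obtain ⟨i, hi⟩ := hmem
  rw [lmin] at *
  rw [← hi]
  exact hM.eigenvalues_pos i

lemma lmax_pos_of_posdef (hk : 1 ≤ k) {M : Matrix (Fin k) (Fin k) ℝ} (hM : M.PosDef) :
    0 < lmax M := by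
  haveI : Nonempty (Fin k) := ⟨⟨0, hk⟩⟩
  have hle := lmin_le_eig hM.1 ⟨0, hk⟩
  have := lmin_pos_of_posdef hk hM
  have hge := eig_le_lmax hM.1 ⟨0, hk⟩
  have := hM.eigenvalues_pos ⟨0, hk⟩
  linarith

/-- Spectral norm bound from a two-sided Loewner bound. -/
lemma norm_le_of_lw (hk : 1 ≤ k) {M : Matrix (Fin k) (Fin k) ℝ} (hM : M.IsHermitian) {c : ℝ}
    (h1 : lw M (c • 1)) (h2 : lw (-(c • 1)) M) : ‖M‖ ≤ c := by
  haveI : Nonempty (Fin k) := ⟨⟨0, hk⟩⟩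
  set b := hM.eigenvectorBasis with hb
  -- eigenvalue bounds
  have heig : ∀ i, |hM.eigenvalues i| ≤ c := by
    intro i
    set v : Fin k → ℝ := ⇑(b i) with hv
    have hmv : M *ᵥ v = hM.eigenvalues i • v := hM.mulVec_eigenvectorBasis i
    have hvv : dotProduct (star v) v = 1 := by
      have hnorm : ‖b i‖ = 1 := b.orthonormal.1 i
      have h0 : (inner ℝ (b i) (b i) : ℝ) = 1 := by
        rw [real_inner_self_eq_norm_sq, hnorm]; norm_num
      rw [EuclideanSpace.inner_eq_star_dotProduct] at h0
      exact h0
    have q1 := Matrix.PosSemidef.dotProduct_mulVec_nonneg h1 v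
    have q2 := Matrix.PosSemidef.dotProduct_mulVec_nonneg h2 v
    have e1 : (c • (1 : Matrix (Fin k) (Fin k) ℝ) - M) *ᵥ v
        = c • v - hM.eigenvalues i • v := by
      rw [Matrix.sub_mulVec, hmv, Matrix.smul_mulVec, Matrix.one_mulVec]
    have e2 : (M - -(c • (1 : Matrix (Fin k) (Fin k) ℝ))) *ᵥ v
        = hM.eigenvalues i • v + c • v := by
      rw [Matrix.sub_mulVec, hmv, Matrix.neg_mulVec, Matrix.smul_mulVec,
        Matrix.one_mulVec, sub_neg_eq_add]
    rw [lw] at h1 h2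
    rw [e1] at q1
    rw [e2] at q2
    simp only [dotProduct_sub, dotProduct_add, dotProduct_smul, hvv,
      smul_eq_mul, mul_one] at q1 q2
    rw [abs_le]
    constructor <;> linarith
  have hc0 : 0 ≤ c := le_trans (abs_nonneg _) (heig ⟨0, hk⟩)
  -- symmetric linear map
  have hsym : (Matrix.toEuclideanLin M).IsSymmetric :=
    (Matrix.isHermitian_iff_isSymmetric).1 hM
  rw [Matrix.l2_opNorm_def]
  apply ContinuousLinearMap.opNorm_le_bound _ hc0
  intro x
  set T := Matrix.toEuclideanLin M with hT
  have hTb : ∀ i, T (b i) = hM.eigenvalues i • b i := by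
    intro i
    apply (WithLp.equiv 2 (Fin k → ℝ)).injective
    rw [hT]
    have hmv : M *ᵥ ⇑(b i) = hM.eigenvalues i • ⇑(b i) := hM.mulVec_eigenvectorBasis i
    exact hmv
  have hrepr : ∀ i, b.repr (T x) i = hM.eigenvalues i * b.repr x i := by
    intro i
    rw [b.repr_apply_apply, b.repr_apply_apply, ← hsym (b i) x, hTb i,
      real_inner_smul_left]
  have key : ‖T x‖ ≤ c * ‖x‖ := by
    have h1' : ‖T x‖ = ‖b.repr (T x)‖ := (b.repr.norm_map (T x)).symm
    have h2' : ‖x‖ = ‖b.repr x‖ := (b.repr.norm_map x).symm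
    rw [h1', h2']
    have h3' : ‖b.repr (T x)‖ ≤ ‖(c • b.repr x : EuclideanSpace ℝ (Fin k))‖ := by
      rw [EuclideanSpace.norm_eq, EuclideanSpace.norm_eq]
      apply Real.sqrt_le_sqrt
      apply Finset.sum_le_sum
      intro i _
      have hb1 : ‖b.repr (T x) i‖ = |hM.eigenvalues i * b.repr x i| := by
        rw [hrepr i, Real.norm_eq_abs]
      have hb2 : ‖(c • b.repr x : EuclideanSpace ℝ (Fin k)) i‖ = |c * b.repr x i| := by
        simp [Real.norm_eq_abs, abs_mul]
      rw [hb1, hb2]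
      have : |hM.eigenvalues i * b.repr x i| ≤ |c * b.repr x i| := by
        rw [abs_mul, abs_mul]
        exact mul_le_mul_of_nonneg_right (le_trans (heig i) (le_abs_self c)) (abs_nonneg _)
      exact pow_le_pow_left₀ (abs_nonneg _) this 2
    refine le_trans h3' ?_
    rw [norm_smul, Real.norm_eq_abs, abs_of_nonneg hc0]
  exact key

end TRVC
namespace TRVC

variable {k : ℕ}

lemma lw_smul_one {c d : ℝ} (h : c ≤ d) :
    lw (c • (1 : Matrix (Fin k) (Fin k) ℝ)) (d • 1) := by
  unfold lw
  rw [← sub_smul]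
  exact psd_smul Matrix.PosSemidef.one (by linarith)

lemma lw_sub_psd {X Y Z : Matrix (Fin k) (Fin k) ℝ} (h : lw X Y) (hZ : Z.PosSemidef) :
    lw (X - Z) Y := by
  unfold lw at *
  have := h.add hZ
  convert this using 1
  abel

end TRVC
namespace TRVC

section Main

variable {n m : ℕ} (A : Matrix (Fin n) (Fin n) ℝ) (B : Matrix (Fin n) (Fin m) ℝ)
  (T : ℕ) (Q : ℕ → Matrix (Fin n) (Fin n) ℝ) (R : ℕ → Matrix (Fin m) (Fin m) ℝ)

lemma Pts_step (hT : 2 ≤ T) {i : ℕ} (hi : i ≤ T - 2) (s : ℕ) :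
    Pts A B T Q R i s
      = ricStep A B (trunc R i s) (trunc Q i s) (Pts A B T Q R (i + 1) s) := by
  have h1 : T - 1 - i = (T - 2 - i) + 1 := by omega
  have h2 : T - 2 - (T - 2 - i) = i := by omega
  have h3 : T - 1 - (i + 1) = T - 2 - i := by omega
  rw [Pts, h1, ricBackTr, h2, Pts, h3]

lemma Pts_top (hT : 2 ≤ T) {i : ℕ} (hi : T - 1 ≤ i) (s : ℕ) :
    Pts A B T Q R i s = trunc Q (T - 1) s := by
  have h1 : T - 1 - i = 0 := by omega
  rw [Pts, h1, ricBackTr]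

variable {Qmin Qmax : Matrix (Fin n) (Fin n) ℝ} {Rmax : Matrix (Fin m) (Fin m) ℝ}
  {Pm : Matrix (Fin n) (Fin n) ℝ}

lemma trunc_propQ (hT : 2 ≤ T) (hQ : ∀ t ≤ T - 1, (Q t).PosSemidef)
    (hQlb : ∀ t ≤ T - 1, (Q t - Qmin).PosSemidef)
    (hQub : ∀ t ≤ T - 1, (Qmax - Q t).PosSemidef)
    {s : ℕ} (hs : s ≤ T - 1) {j : ℕ} (hj : j ≤ T - 1) :
    (trunc Q j s).PosSemidef ∧ lw Qmin (trunc Q j s) ∧ lw (trunc Q j s) Qmax := by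
  rw [trunc]
  split
  · exact ⟨hQ j hj, hQlb j hj, hQub j hj⟩
  · exact ⟨hQ s hs, hQlb s hs, hQub s hs⟩

lemma trunc_propR (hT : 2 ≤ T) (hR : ∀ t ≤ T - 2, (R t).PosDef)
    (hRub : ∀ t ≤ T - 2, (Rmax - R t).PosSemidef)
    {s : ℕ} (hs : s ≤ T - 1) {j : ℕ} (hj : j ≤ T - 2) :
    (trunc R j s).PosDef ∧ lw (trunc R j s) Rmax := by
  rw [trunc]
  split
  · exact ⟨hR j hj, hRub j hj⟩
  · next h =>
    have hs2 : s ≤ T - 2 := by omega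
    exact ⟨hR s hs2, hRub s hs2⟩

/-- Invariants of the truncated Riccati recursion: PSD, bounded above by `Pm`,
bounded below by `Qmin`. -/
lemma invariant (hT : 2 ≤ T)
    (hQ : ∀ t ≤ T - 1, (Q t).PosSemidef) (hR : ∀ t ≤ T - 2, (R t).PosDef)
    (hQlb : ∀ t ≤ T - 1, (Q t - Qmin).PosSemidef)
    (hQub : ∀ t ≤ T - 1, (Qmax - Q t).PosSemidef)
    (hRub : ∀ t ≤ T - 2, (Rmax - R t).PosSemidef)
    (hRmaxPD : Rmax.PosDef) (hPmPSD : Pm.PosSemidef)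
    (hPmfix : ricStep A B Rmax Qmax Pm = Pm)
    {s : ℕ} (hs : s ≤ T - 1) (d : ℕ) :
    (ricBackTr A B T Q R s d).PosSemidef ∧ lw (ricBackTr A B T Q R s d) Pm
      ∧ lw Qmin (ricBackTr A B T Q R s d) := by
  have hQmaxPm : lw Qmax Pm := by
    have := ricStep_ge_Q A B Qmax hRmaxPD hPmPSD
    rwa [hPmfix] at this
  induction d with
  | zero =>
    have h := trunc_propQ T Q hT hQ hQlb hQub hs (le_refl (T - 1))
    exact ⟨h.1, lw_trans h.2.2 hQmaxPm, h.2.1⟩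
  | succ d ih =>
    obtain ⟨ihPSD, ihPm, ihQmin⟩ := ih
    have hRj := trunc_propR T R hT hR hRub hs (j := T - 2 - d) (by omega)
    have hQj := trunc_propQ T Q hT hQ hQlb hQub hs (j := T - 2 - d) (by omega)
    have hstep : ricBackTr A B T Q R s (d + 1)
        = ricStep A B (trunc R (T - 2 - d) s) (trunc Q (T - 2 - d) s)
          (ricBackTr A B T Q R s d) := by rw [ricBackTr]
    rw [hstep]
    refine ⟨ricStep_psd A B hQj.1 hRj.1 ihPSD, ?_, ?_⟩
    · have := ricStep_mono A B hRj.1 hRmaxPD ihPSD hPmPSD ihPm hQj.2.2 hRj.2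
      rwa [hPmfix] at this
    · exact lw_trans hQj.2.1 (ricStep_ge_Q A B _ hRj.1 ihPSD)

end Main

end TRVC

open TRVC

/-- Exponential convergence of the truncated Riccati value matrices:
`‖P_{i|t} − P_{i|t₀}‖ ≤ (λ_max(P̄_max)²/λ_min(Q̄_min))·γ^{t+1−i}`. -/
theorem truncated_riccati_value_convergence {n m : ℕ} (hn : 1 ≤ n) (hm : 1 ≤ m)
    (A : Matrix (Fin n) (Fin n) ℝ) (B : Matrix (Fin n) (Fin m) ℝ)
    (T : ℕ) (hT : 2 ≤ T)
    (Q : ℕ → Matrix (Fin n) (Fin n) ℝ) (R : ℕ → Matrix (Fin m) (Fin m) ℝ)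
    (hQ : ∀ t ≤ T - 1, (Q t).PosSemidef) (hR : ∀ t ≤ T - 2, (R t).PosDef)
    (Qmin Qmax : Matrix (Fin n) (Fin n) ℝ) (Rmin Rmax : Matrix (Fin m) (Fin m) ℝ)
    (hQminPD : Qmin.PosDef) (hRminPD : Rmin.PosDef)
    (hQmaxH : Qmax.IsHermitian) (hRmaxH : Rmax.IsHermitian)
    (hQlb : ∀ t ≤ T - 1, (Q t - Qmin).PosSemidef)
    (hQub : ∀ t ≤ T - 1, (Qmax - Q t).PosSemidef)
    (hRlb : ∀ t ≤ T - 2, (R t - Rmin).PosSemidef)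
    (hRub : ∀ t ≤ T - 2, (Rmax - R t).PosSemidef)
    (Pm : Matrix (Fin n) (Fin n) ℝ) (hPmPD : Pm.PosDef)
    (hDARE : Pm = Qmax + Aᵀ * Pm * A -
      Aᵀ * Pm * B * (Rmax + Bᵀ * Pm * B)⁻¹ * Bᵀ * Pm * A)
    (α : ℝ) (hα : α = ⨆ p : Fin (T - 1) × Fin T,
      lmax (Aᵀ * Pts A B T Q R ((p.1 : ℕ) + 1) (p.2 : ℕ) * A))
    (hαpos : 0 < α)
    (β : ℝ) (hβ : β = ⨅ t : Fin (T - 1), lmin (Q (t : ℕ)))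
    (γ : ℝ) (hγ : γ = α / (α + β)) :
    ∀ i t t₀ : ℕ, i ≤ t → t ≤ t₀ → t₀ ≤ T - 1 →
      ‖Pts A B T Q R i t - Pts A B T Q R i t₀‖ ≤
        (lmax Pm) ^ 2 / lmin Qmin * γ ^ (t + 1 - i) := by
  intro i t t₀ hit htt₀ ht₀
  haveI : Nonempty (Fin (T - 1)) := ⟨⟨0, by omega⟩⟩
  -- scalar facts
  have hlminQ : 0 < lmin Qmin := lmin_pos_of_posdef hn hQminPD
  have hlmaxPm : 0 < lmax Pm := lmax_pos_of_posdef hn hPmPD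
  have hQPD : ∀ j ≤ T - 1, (Q j).PosDef := by
    intro j hj
    have := hQminPD.add_posSemidef (hQlb j hj)
    rwa [add_sub_cancel] at this
  have hβpos : 0 < β := by
    rw [hβ]
    obtain ⟨j, hj⟩ := Finite.exists_min (fun j : Fin (T - 1) => lmin (Q (j : ℕ)))
    have h0 : 0 < lmin (Q (j : ℕ)) :=
      lmin_pos_of_posdef hn (hQPD (j : ℕ) (by omega))
    exact lt_of_lt_of_le h0 (le_ciInf hj)
  have hαβ : 0 < α + β := by linarith
  have hγpos : 0 < γ := by rw [hγ]; exact div_pos hαpos hαβ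
  have hγe : ∀ e : ℕ, 0 ≤ γ ^ e := fun e => pow_nonneg hγpos.le e
  have hRHS0 : 0 ≤ lmax Pm ^ 2 / lmin Qmin * γ ^ (t + 1 - i) :=
    mul_nonneg (div_nonneg (sq_nonneg _) hlminQ.le) (hγe _)
  rcases eq_or_lt_of_le htt₀ with heq | hlt
  · subst heq
    simpa using hRHS0
  -- now t < t₀
  have ht2 : t ≤ T - 2 := by omega
  have hRmaxPD : Rmax.PosDef := by
    have hsum := (hRub 0 (by omega)).add (hRlb 0 (by omega))
    rw [sub_add_sub_cancel] at hsum
    have := hRminPD.add_posSemidef hsum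
    rwa [add_sub_cancel] at this
  have hPmfix : ricStep A B Rmax Qmax Pm = Pm := by
    rw [ricStep, gainK, Matrix.mul_neg]
    conv_rhs => rw [hDARE]
    simp only [sub_eq_add_neg, Matrix.mul_assoc]
    abel
  have inv : ∀ s ≤ T - 1, ∀ d : ℕ,
      (ricBackTr A B T Q R s d).PosSemidef ∧ lw (ricBackTr A B T Q R s d) Pm
        ∧ lw Qmin (ricBackTr A B T Q R s d) := by
    intro s hs d
    exact invariant A B T Q R hT hQ hR hQlb hQub hRub hRmaxPD hPmPD.posSemidef hPmfix hs d
  have invP : ∀ (j s : ℕ), s ≤ T - 1 →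
      (Pts A B T Q R j s).PosSemidef ∧ lw (Pts A B T Q R j s) Pm
        ∧ lw Qmin (Pts A B T Q R j s) := by
    intro j s hs
    exact inv s hs (T - 1 - j)
  -- Pm ⪯ lmax Pm • 1 and lmin Qmin • 1 ⪯ Qmin
  have hPmle : lw Pm ((lmax Pm) • 1) :=
    herm_le_smul_one hPmPD.isHermitian (fun j => eig_le_lmax _ j)
  have hQminge : lw ((lmin Qmin) • 1) Qmin :=
    smul_one_le_herm hQminPD.isHermitian (fun j => lmin_le_eig _ j)
  -- α bound
  have hαbound : ∀ i' s : ℕ, i' ≤ T - 2 → s ≤ T - 1 →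
      lw (Aᵀ * Pts A B T Q R (i' + 1) s * A) (α • 1) := by
    intro i' s hi' hs
    have hPSD : (Pts A B T Q R (i' + 1) s).PosSemidef := (invP (i' + 1) s hs).1
    have hH : (Aᵀ * Pts A B T Q R (i' + 1) s * A).PosSemidef := psd_conj hPSD A
    have hle : lmax (Aᵀ * Pts A B T Q R (i' + 1) s * A) ≤ α := by
      rw [hα]
      have hbdd : BddAbove (Set.range (fun p : Fin (T - 1) × Fin T =>
          lmax (Aᵀ * Pts A B T Q R ((p.1 : ℕ) + 1) (p.2 : ℕ) * A))) :=
        (Set.finite_range _).bddAbove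
      exact le_ciSup hbdd (⟨⟨i', by omega⟩, ⟨s, by omega⟩⟩ : Fin (T - 1) × Fin T)
    exact lw_trans (herm_le_smul_one hH.isHermitian (fun j => eig_le_lmax _ j)) (lw_smul_one hle)
  -- β bound
  have hβbound : ∀ j : ℕ, j ≤ T - 2 → lw (β • 1) (Q j) := by
    intro j hj
    have hle : β ≤ lmin (Q j) := by
      rw [hβ]
      have hbdd : BddBelow (Set.range (fun j : Fin (T - 1) => lmin (Q (j : ℕ)))) :=
        (Set.finite_range _).bddBelow
      exact ciInf_le hbdd (⟨j, by omega⟩ : Fin (T - 1))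
    exact lw_trans (lw_smul_one hle)
      (smul_one_le_herm (hQ j (by omega)).isHermitian (fun jj => lmin_le_eig _ jj))
  set c1 : ℝ := lmax Pm / lmin Qmin with hc1
  have hc1pos : 0 < c1 := div_pos hlmaxPm hlminQ
  -- main contraction induction
  have main : ∀ e : ℕ, e ≤ t + 1 →
      lw (Pts A B T Q R (t + 1 - e) t - Pts A B T Q R (t + 1 - e) t₀)
        ((c1 * γ ^ e) • Pts A B T Q R (t + 1 - e) t₀)
      ∧ lw (Pts A B T Q R (t + 1 - e) t₀ - Pts A B T Q R (t + 1 - e) t)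
        ((c1 * γ ^ e) • Pts A B T Q R (t + 1 - e) t) := by
    intro e
    induction e with
    | zero =>
      intro _
      simp only [Nat.sub_zero, pow_zero, mul_one]
      have base : ∀ s1 s2 : ℕ, s1 ≤ T - 1 → s2 ≤ T - 1 →
          lw (Pts A B T Q R (t + 1) s1 - Pts A B T Q R (t + 1) s2)
            (c1 • Pts A B T Q R (t + 1) s2) := by
        intro s1 s2 hs1 hs2
        have h1 : lw (Pts A B T Q R (t + 1) s1) (c1 • Pts A B T Q R (t + 1) s2) := by
          refine lw_trans (invP (t + 1) s1 hs1).2.1 (lw_trans hPmle ?_)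
          have heqs : (lmax Pm) • (1 : Matrix (Fin n) (Fin n) ℝ)
              = (c1 * lmin Qmin) • 1 := by
            rw [hc1]
            congr 1
            field_simp
          rw [heqs]
          have h2 : lw ((c1 * lmin Qmin) • (1 : Matrix (Fin n) (Fin n) ℝ)) (c1 • Qmin) := by
            have := lw_smul hQminge hc1pos.le
            rwa [smul_smul] at this
          refine lw_trans h2 (lw_smul (invP (t + 1) s2 hs2).2.2 hc1pos.le)
        exact lw_sub_psd h1 (invP (t + 1) s2 hs2).1
      exact ⟨base t t₀ (by omega) (by omega), base t₀ t (by omega) (by omega)⟩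
    | succ e ih =>
      intro he
      have het : e ≤ t := by omega
      obtain ⟨ih1, ih2⟩ := ih (by omega)
      set i' := t - e with hi'
      have hidx : t + 1 - (e + 1) = i' := by omega
      have hidx2 : t + 1 - e = i' + 1 := by omega
      rw [hidx2] at ih1 ih2
      rw [hidx]
      have hi'T : i' ≤ T - 2 := by omega
      have hi't : i' ≤ t := by omega
      have hi't₀ : i' ≤ t₀ := by omega
      have htrQ : trunc Q i' t = Q i' := by rw [trunc, if_pos hi't]
      have htrQ₀ : trunc Q i' t₀ = Q i' := by rw [trunc, if_pos hi't₀]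
      have htrR : trunc R i' t = R i' := by rw [trunc, if_pos hi't]
      have htrR₀ : trunc R i' t₀ = R i' := by rw [trunc, if_pos hi't₀]
      have hPt : Pts A B T Q R i' t
          = ricStep A B (R i') (Q i') (Pts A B T Q R (i' + 1) t) := by
        rw [Pts_step A B T Q R hT hi'T t, htrQ, htrR]
      have hPt₀ : Pts A B T Q R i' t₀
          = ricStep A B (R i') (Q i') (Pts A B T Q R (i' + 1) t₀) := by
        rw [Pts_step A B T Q R hT hi'T t₀, htrQ₀, htrR₀]
      have hRi : (R i').PosDef := hR i' hi'T
      have hP1 : (Pts A B T Q R (i' + 1) t).PosSemidef := (invP (i' + 1) t (by omega)).1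
      have hP2 : (Pts A B T Q R (i' + 1) t₀).PosSemidef := (invP (i' + 1) t₀ (by omega)).1
      have hcγ : (0 : ℝ) ≤ c1 * γ ^ e := mul_nonneg hc1pos.le (hγe e)
      constructor
      · -- first direction
        set L₂ := A + B * gainK A B (R i') (Pts A B T Q R (i' + 1) t₀) with hL₂
        have hdiff := ricStep_diff_le A B (Q i') hRi hP1 hP2
        rw [← hPt, ← hPt₀] at hdiff
        have hcong := lw_congr ih1 L₂
        have hsm : L₂ᵀ * ((c1 * γ ^ e) • Pts A B T Q R (i' + 1) t₀) * L₂
            = (c1 * γ ^ e) • (L₂ᵀ * Pts A B T Q R (i' + 1) t₀ * L₂) := by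
          rw [Matrix.mul_smul, Matrix.smul_mul]
        rw [hsm] at hcong
        have hgam := gamma_lemma A B hRi hP2 hαpos hβpos
          (hαbound i' t₀ hi'T (by omega)) (hβbound i' hi'T)
        rw [← hγ, ← hPt₀] at hgam
        have hgam' := lw_smul hgam hcγ
        rw [smul_smul] at hgam'
        have hfin : lw (Pts A B T Q R i' t - Pts A B T Q R i' t₀)
            ((c1 * γ ^ e * γ) • Pts A B T Q R i' t₀) :=
          lw_trans hdiff (lw_trans hcong hgam')
        have : c1 * γ ^ e * γ = c1 * γ ^ (e + 1) := by ring
        rwa [this] at hfin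
      · -- second direction
        set L₁ := A + B * gainK A B (R i') (Pts A B T Q R (i' + 1) t) with hL₁
        have hdiff := ricStep_diff_le A B (Q i') hRi hP2 hP1
        rw [← hPt, ← hPt₀] at hdiff
        have hcong := lw_congr ih2 L₁
        have hsm : L₁ᵀ * ((c1 * γ ^ e) • Pts A B T Q R (i' + 1) t) * L₁
            = (c1 * γ ^ e) • (L₁ᵀ * Pts A B T Q R (i' + 1) t * L₁) := by
          rw [Matrix.mul_smul, Matrix.smul_mul]
        rw [hsm] at hcong
        have hgam := gamma_lemma A B hRi hP1 hαpos hβpos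
          (hαbound i' t hi'T (by omega)) (hβbound i' hi'T)
        rw [← hγ, ← hPt] at hgam
        have hgam' := lw_smul hgam hcγ
        rw [smul_smul] at hgam'
        have hfin : lw (Pts A B T Q R i' t₀ - Pts A B T Q R i' t)
            ((c1 * γ ^ e * γ) • Pts A B T Q R i' t) :=
          lw_trans hdiff (lw_trans hcong hgam')
        have : c1 * γ ^ e * γ = c1 * γ ^ (e + 1) := by ring
        rwa [this] at hfin
  -- conclude
  set e := t + 1 - i with he
  have hee : e ≤ t + 1 := by omega
  have hie : t + 1 - e = i := by omega
  obtain ⟨hu, hl⟩ := main e hee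
  rw [hie] at hu hl
  set c' : ℝ := lmax Pm ^ 2 / lmin Qmin * γ ^ e with hc'
  have hscal : ∀ s : ℕ, s ≤ T - 1 →
      lw ((c1 * γ ^ e) • Pts A B T Q R i s) (c' • 1) := by
    intro s hs
    have h1 := lw_smul (lw_trans (invP i s hs).2.1 hPmle)
      (mul_nonneg hc1pos.le (hγe e))
    rw [smul_smul] at h1
    have : c1 * γ ^ e * lmax Pm = c' := by
      rw [hc', hc1]
      field_simp
    rwa [this] at h1
  have hup : lw (Pts A B T Q R i t - Pts A B T Q R i t₀) (c' • 1) :=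
    lw_trans hu (hscal t₀ (by omega))
  have hlow : lw (Pts A B T Q R i t₀ - Pts A B T Q R i t) (c' • 1) :=
    lw_trans hl (hscal t (by omega))
  have hlow' : lw (-(c' • 1)) (Pts A B T Q R i t - Pts A B T Q R i t₀) := by
    unfold lw at hlow ⊢
    convert hlow using 1
    abel
  have hherm : (Pts A B T Q R i t - Pts A B T Q R i t₀).IsHermitian :=
    ((invP i t (by omega)).1.isHermitian).sub ((invP i t₀ (by omega)).1.isHermitian)
  exact norm_le_of_lw hn hherm hup hlow'


end
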